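/- Let L be a lattice of rank n ≥ 2 in ℝ^m with λ2(L) ≥ γ·λ1(L) for some real γ ≥ 1, and let v ∈ L be a vector with ‖v‖ = λ1(L). Then every w ∈ L with P_v w ≠ 0 satisfies ‖P_v w‖ ≥ sqrt(γ² − 1/4)·‖v‖. -/

import Mathlib

noncomputable section

/-- The lattice generated by the vectors `B i`: all integer linear combinations. -/
def latticeOf {m n : ℕ} (B : Fin n → EuclideanSpace ℝ (Fin m)) :
    Set (EuclideanSpace ℝ (Fin m)) :=
  {v | ∃ x : Fin n → ℤ, v = ∑ i, (x i : ℝ) • B i}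

/-- `λ₁ L`: the minimum Euclidean norm of a nonzero vector of `L`. -/
def lambda1 {m : ℕ} (L : Set (EuclideanSpace ℝ (Fin m))) : ℝ :=
  sInf {r | ∃ v ∈ L, v ≠ 0 ∧ ‖v‖ = r}

/-- `λ₂ L`: the smallest `r` such that `L` contains two linearly independent
vectors of norm at most `r`. -/
def lambda2 {m : ℕ} (L : Set (EuclideanSpace ℝ (Fin m))) : ℝ :=
  sInf {r | ∃ v ∈ L, ∃ w ∈ L, LinearIndependent ℝ ![v, w] ∧ ‖v‖ ≤ r ∧ ‖w‖ ≤ r}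

/-- `projPerp v w`: the orthogonal projection of `w` onto the orthogonal complement of
the line spanned by `v`. -/
noncomputable def projPerp {m : ℕ} (v w : EuclideanSpace ℝ (Fin m)) :
    EuclideanSpace ℝ (Fin m) :=
  (Submodule.orthogonalProjectionOnto ((Submodule.span ℝ {v})ᗮ) w : EuclideanSpace ℝ (Fin m))

lemma projPerp_eq_clm {m : ℕ} (v w : EuclideanSpace ℝ (Fin m)) :
    projPerp v w =
      (((Submodule.span ℝ {v})ᗮ).subtypeL.comp
        (Submodule.orthogonalProjectionOnto ((Submodule.span ℝ {v})ᗮ))) w := rfl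

lemma projPerp_self {m : ℕ} (v : EuclideanSpace ℝ (Fin m)) : projPerp v v = 0 := by
  unfold projPerp
  rw [Submodule.orthogonalProjectionOnto_apply_of_mem_orthogonal]
  · rfl
  · exact (Submodule.le_orthogonal_orthogonal _) (Submodule.mem_span_singleton_self v)

lemma projPerp_sub_smul {m : ℕ} (v w : EuclideanSpace ℝ (Fin m)) (c : ℝ) :
    projPerp v (w - c • v) = projPerp v w := by
  simp only [projPerp_eq_clm, map_sub, map_smul]
  rw [← projPerp_eq_clm, ← projPerp_eq_clm, projPerp_self]
  simp

/-- If `L` is a lattice of rank `n ≥ 2` with `λ₂(L) ≥ γ·λ₁(L)` for some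
`γ ≥ 1`, and `v ∈ L` has `‖v‖ = λ₁(L)`, then every `w ∈ L` whose projection orthogonal
to `v` is nonzero satisfies `‖P_v w‖ ≥ √(γ² - 1/4)·‖v‖`. -/
theorem stmt10 {m n : ℕ} (hn : 2 ≤ n) (B : Fin n → EuclideanSpace ℝ (Fin m))
    (hB : LinearIndependent ℝ B) (γ : ℝ) (hγ : 1 ≤ γ)
    (hgap : γ * lambda1 (latticeOf B) ≤ lambda2 (latticeOf B))
    (v : EuclideanSpace ℝ (Fin m)) (hvL : v ∈ latticeOf B)
    (hv : ‖v‖ = lambda1 (latticeOf B)) :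
    ∀ w ∈ latticeOf B, projPerp v w ≠ 0 →
      Real.sqrt (γ ^ 2 - 1 / 4) * ‖v‖ ≤ ‖projPerp v w‖ := by
  intro w hwL hPw
  by_cases hv0 : v = 0
  · rw [hv0, norm_zero, mul_zero]
    exact norm_nonneg _
  have hvpos : (0:ℝ) < ‖v‖ := norm_pos_iff.mpr hv0
  set α : ℝ := inner ℝ v w / ‖v‖ ^ 2 with hα
  set k : ℤ := round α with hk
  set w' : EuclideanSpace ℝ (Fin m) := w - (k:ℝ) • v with hw'
  -- w' is in the lattice
  have hw'L : w' ∈ latticeOf B := by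
    obtain ⟨x, hx⟩ := hwL
    obtain ⟨y, hy⟩ := hvL
    refine ⟨fun i => x i - k * y i, ?_⟩
    rw [hw', hx, hy, Finset.smul_sum, ← Finset.sum_sub_distrib]
    refine Finset.sum_congr rfl fun i _ => ?_
    push_cast
    module
  -- projPerp of w' equals that of w
  have hPeq : projPerp v w' = projPerp v w := projPerp_sub_smul v w (k:ℝ)
  have hPw' : projPerp v w' ≠ 0 := hPeq ▸ hPw
  have hw'0 : w' ≠ 0 := by
    intro h
    apply hPw'
    rw [h]
    simp [projPerp]
  -- projection of w' onto span v
  have hspan : (Submodule.orthogonalProjectionOnto (Submodule.span ℝ {v}) w' :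
      EuclideanSpace ℝ (Fin m)) = (α - (k:ℝ)) • v := by
    have hos : (Submodule.orthogonalProjectionOnto (Submodule.span ℝ {v}) w' :
        EuclideanSpace ℝ (Fin m)) = (inner ℝ v w' / ((‖v‖ ^ 2 : ℝ) : ℝ)) • v :=
      Submodule.starProjection_singleton ℝ (v := v) w'
    rw [hos]
    congr 1
    rw [hw', inner_sub_right, inner_smul_right, hα, real_inner_self_eq_norm_sq]
    have hvne : ‖v‖ ^ 2 ≠ 0 := by positivity
    field_simp
  -- Pythagoras
  have hpyth : ‖w'‖ ^ 2 = (α - (k:ℝ)) ^ 2 * ‖v‖ ^ 2 + ‖projPerp v w'‖ ^ 2 := by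
    have := Submodule.norm_sq_eq_add_norm_sq_projection w' (Submodule.span ℝ {v})
    rw [this]
    congr 1
    rw [show ‖Submodule.orthogonalProjectionOnto (Submodule.span ℝ {v}) w'‖ =
        ‖(Submodule.orthogonalProjectionOnto (Submodule.span ℝ {v}) w' : EuclideanSpace ℝ (Fin m))‖ from rfl,
      hspan, norm_smul]
    rw [Real.norm_eq_abs, mul_pow, sq_abs]
  have hround : (α - (k:ℝ)) ^ 2 ≤ 1 / 4 := by
    have h1 : |α - (k:ℝ)| ≤ 1 / 2 := abs_sub_round α
    obtain ⟨ha, hb⟩ := abs_le.mp h1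
    nlinarith
  -- v and w' are linearly independent
  have hli : LinearIndependent ℝ ![v, w'] := by
    rw [LinearIndependent.pair_iff]
    intro s t hst
    have ht : t = 0 := by
      have h2 : projPerp v (s • v + t • w') = 0 := by rw [hst]; simp [projPerp]
      rw [projPerp_eq_clm] at h2
      simp only [map_add, map_smul] at h2
      rw [← projPerp_eq_clm, ← projPerp_eq_clm, projPerp_self, smul_zero, zero_add] at h2
      by_contra ht0
      exact hPw' (by simpa [ht0] using (smul_eq_zero.mp h2).resolve_left ht0 ▸ rfl)
    subst ht
    simp only [zero_smul, add_zero, smul_eq_zero] at hst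
    exact ⟨hst.resolve_right hv0, rfl⟩
  -- λ1 ≤ ‖w'‖
  have hbdd1 : BddBelow {r : ℝ | ∃ u ∈ latticeOf B, u ≠ 0 ∧ ‖u‖ = r} := by
    refine ⟨0, fun r hr => ?_⟩
    obtain ⟨u, _, _, hu⟩ := hr
    rw [← hu]; exact norm_nonneg u
  have hl1 : lambda1 (latticeOf B) ≤ ‖w'‖ :=
    csInf_le hbdd1 ⟨w', hw'L, hw'0, rfl⟩
  -- λ2 ≤ max ‖v‖ ‖w'‖
  have hbdd2 : BddBelow {r : ℝ | ∃ a ∈ latticeOf B, ∃ b ∈ latticeOf B,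
      LinearIndependent ℝ ![a, b] ∧ ‖a‖ ≤ r ∧ ‖b‖ ≤ r} := by
    refine ⟨0, fun r hr => ?_⟩
    obtain ⟨a, _, b, _, _, ha, _⟩ := hr
    exact le_trans (norm_nonneg a) ha
  have hl2 : lambda2 (latticeOf B) ≤ max ‖v‖ ‖w'‖ :=
    csInf_le hbdd2 ⟨v, hvL, w', hw'L, hli, le_max_left _ _, le_max_right _ _⟩
  -- key : γ‖v‖ ≤ ‖w'‖
  rw [← hv] at hgap hl1
  have hmax : γ * ‖v‖ ≤ max ‖v‖ ‖w'‖ := le_trans hgap hl2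
  have hkey : γ * ‖v‖ ≤ ‖w'‖ := by
    rcases le_max_iff.mp hmax with h | h
    · linarith
    · exact h
  -- conclude
  rw [← hPeq]
  have hsq : (0:ℝ) ≤ γ ^ 2 - 1 / 4 := by nlinarith
  have h2 : (γ * ‖v‖) * (γ * ‖v‖) ≤ ‖w'‖ * ‖w'‖ :=
    mul_self_le_mul_self (by positivity) hkey
  have h3 : (α - (k:ℝ)) ^ 2 * ‖v‖ ^ 2 ≤ (1 / 4) * ‖v‖ ^ 2 :=
    mul_le_mul_of_nonneg_right hround (sq_nonneg _)
  have hfin : (γ ^ 2 - 1 / 4) * ‖v‖ ^ 2 ≤ ‖projPerp v w'‖ ^ 2 := by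
    nlinarith
  calc Real.sqrt (γ ^ 2 - 1 / 4) * ‖v‖
      = Real.sqrt ((γ ^ 2 - 1 / 4) * ‖v‖ ^ 2) := by
        rw [Real.sqrt_mul hsq, Real.sqrt_sq (norm_nonneg v)]
    _ ≤ Real.sqrt (‖projPerp v w'‖ ^ 2) := Real.sqrt_le_sqrt hfin
    _ = ‖projPerp v w'‖ := Real.sqrt_sq (norm_nonneg _)

end
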